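/- Σ_{n=1}^{∞} ζ(2n)·n²/16^n = (π/32)·(3π/2 − π²/4 − 1). -/

import Mathlib

set_option maxHeartbeats 1600000

open Real Filter

/-! ### Auxiliary lemmas -/

private lemma aux_inj2 : Function.Injective (fun j : ℕ => 2 * j) :=
  fun a b h => by dsimp only at h; omega

private lemma aux_inj21 : Function.Injective (fun j : ℕ => 2 * j + 1) :=
  fun a b h => by dsimp only at h; omega

/-- Pairing consecutive terms of a convergent series. -/
private lemma aux_hasSum_pair {f : ℕ → ℝ} {S : ℝ} (hf : HasSum f S) :
    HasSum (fun j : ℕ => f (2 * j) + f (2 * j + 1)) S := by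
  have he : Summable (fun j : ℕ => f (2 * j)) := hf.summable.comp_injective aux_inj2
  have ho : Summable (fun j : ℕ => f (2 * j + 1)) := hf.summable.comp_injective aux_inj21
  have hsum : HasSum f (∑' j, f (2 * j) + ∑' j, f (2 * j + 1)) :=
    he.hasSum.even_add_odd ho.hasSum
  rw [hf.unique hsum]
  exact he.hasSum.add ho.hasSum

private lemma aux_hasSum_shift {g : ℕ → ℝ} {S : ℝ} (hg : HasSum g S) :
    HasSum (fun k : ℕ => g (k + 1)) (S - g 0) := by
  refine (hasSum_nat_add_iff 1).mpr ?_
  simpa using hg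

/-- The three basic pieces coming from partial fractions. -/
private noncomputable def pA (j : ℕ) : ℝ := 1 / (4 * (j : ℝ) + 3) - 1 / (4 * (j : ℝ) + 5)
private noncomputable def pB (j : ℕ) : ℝ :=
  1 / (4 * (j : ℝ) + 3) ^ 2 + 1 / (4 * (j : ℝ) + 5) ^ 2
private noncomputable def pC (j : ℕ) : ℝ :=
  1 / (4 * (j : ℝ) + 3) ^ 3 - 1 / (4 * (j : ℝ) + 5) ^ 3

private lemma aux_summable_base : Summable (fun j : ℕ => 1 / ((j : ℝ) + 1) ^ 2) := by
  have := (summable_nat_add_iff (f := fun n : ℕ => 1 / (n : ℝ) ^ 2) 1).mpr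
    (Real.summable_one_div_nat_pow.mpr one_lt_two)
  simpa using this

private lemma aux_summable_pA : Summable pA := by
  have h1 : Summable (fun j : ℕ => 1 / (4 * (j : ℝ) + 3) ^ 2) := by
    apply Summable.of_nonneg_of_le (fun j => by positivity) (fun j => ?_) aux_summable_base
    have h1 : ((j : ℝ) + 1) ≤ 4 * (j : ℝ) + 3 := by
      have := Nat.cast_nonneg (α := ℝ) j; linarith
    have h2 : ((j : ℝ) + 1) ^ 2 ≤ (4 * (j : ℝ) + 3) ^ 2 :=
      pow_le_pow_left₀ (by positivity) h1 2
    exact div_le_div_of_nonneg_left one_pos.le (by positivity) h2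
  apply Summable.of_nonneg_of_le (fun j => ?_) (fun j => ?_) (h1.mul_left 2)
  · unfold pA
    have h3 : (0:ℝ) < 4 * (j : ℝ) + 3 := by positivity
    rw [sub_nonneg]
    exact one_div_le_one_div_of_le h3 (by linarith)
  · unfold pA
    have h3 : (0:ℝ) < 4 * (j : ℝ) + 3 := by positivity
    have h5 : (0:ℝ) < 4 * (j : ℝ) + 5 := by positivity
    have key : 1 / (4 * (j : ℝ) + 3) - 1 / (4 * (j : ℝ) + 5)
        = 2 / ((4 * (j : ℝ) + 3) * (4 * (j : ℝ) + 5)) := by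
      field_simp
      ring
    rw [key, mul_one_div]
    gcongr
    nlinarith [Nat.cast_nonneg (α := ℝ) j]

private lemma aux_leibniz_partial (K : ℕ) :
    ∑ i ∈ Finset.range (2 * K + 1), (-1 : ℝ) ^ i / (2 * i + 1)
      = 1 - ∑ j ∈ Finset.range K, pA j := by
  induction K with
  | zero => simp
  | succ K ih =>
    have h : 2 * (K + 1) + 1 = (2 * K + 1) + 1 + 1 := by ring
    rw [h, Finset.sum_range_succ, Finset.sum_range_succ, ih, Finset.sum_range_succ]
    have e1 : (-1 : ℝ) ^ (2 * K + 1) = -1 := by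
      rw [pow_succ, pow_mul]; norm_num
    have e2 : (-1 : ℝ) ^ (2 * K + 1 + 1) = 1 := by
      rw [pow_succ, e1]; norm_num
    rw [e1, e2]
    unfold pA
    push_cast
    ring

private lemma aux_hasSum_pA : HasSum pA (1 - π / 4) := by
  have hp := aux_summable_pA
  have htend : Tendsto (fun K : ℕ => ∑ j ∈ Finset.range K, pA j) atTop (nhds (∑' j, pA j)) :=
    hp.hasSum.tendsto_sum_nat
  have hmono : StrictMono (fun K : ℕ => 2 * K + 1) := by
    intro a b h; dsimp only; omega
  have hsub : Tendsto (fun K : ℕ => ∑ i ∈ Finset.range (2 * K + 1), (-1 : ℝ) ^ i / (2 * i + 1))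
      atTop (nhds (π / 4)) :=
    Real.tendsto_sum_pi_div_four.comp hmono.tendsto_atTop
  have hsub' : Tendsto (fun K : ℕ => 1 - ∑ j ∈ Finset.range K, pA j) atTop (nhds (π / 4)) := by
    simpa only [aux_leibniz_partial] using hsub
  have hlim : Tendsto (fun K : ℕ => 1 - ∑ j ∈ Finset.range K, pA j) atTop
      (nhds (1 - ∑' j, pA j)) := tendsto_const_nhds.sub htend
  have huniq := tendsto_nhds_unique hlim hsub'
  have hval : ∑' j, pA j = 1 - π / 4 := by linarith
  rw [← hval]; exact hp.hasSum

private lemma aux_hasSum_odd_sq :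
    HasSum (fun k : ℕ => 1 / ((2 * k + 1 : ℕ) : ℝ) ^ 2) (π ^ 2 / 8) := by
  have hz := hasSum_zeta_two
  have he : HasSum (fun k : ℕ => 1 / ((2 * k : ℕ) : ℝ) ^ 2) (π ^ 2 / 24) := by
    have h4 : HasSum (α := ℝ) _ _ := hz.div_const 4
    have hfe : (fun k : ℕ => 1 / ((2 * k : ℕ) : ℝ) ^ 2) = fun k : ℕ => 1 / (k : ℝ) ^ 2 / 4 := by
      funext k
      rcases Nat.eq_zero_or_pos k with rfl | hk
      · simp
      · have : (k : ℝ) ≠ 0 := Nat.cast_ne_zero.mpr hk.ne'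
        push_cast
        field_simp
        ring
    rw [hfe]
    convert h4 using 1
    ring
  have ho : Summable (fun k : ℕ => 1 / ((2 * k + 1 : ℕ) : ℝ) ^ 2) :=
    hz.summable.comp_injective aux_inj21
  have hsum : HasSum (fun n : ℕ => 1 / (n : ℝ) ^ 2)
      (π ^ 2 / 24 + ∑' k, 1 / ((2 * k + 1 : ℕ) : ℝ) ^ 2) :=
    he.even_add_odd ho.hasSum
  have hval := hz.unique hsum
  have h8 : ∑' k, 1 / ((2 * k + 1 : ℕ) : ℝ) ^ 2 = π ^ 2 / 8 := by linarith
  rw [← h8]; exact ho.hasSum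

private lemma aux_hasSum_beta_three :
    HasSum (fun k : ℕ => (-1 : ℝ) ^ k / ((2 * k + 1 : ℕ) : ℝ) ^ 3) (π ^ 3 / 32) := by
  have hL := hasSum_L_function_mod_four_eval_three
  have hrestrict := (aux_inj21.hasSum_iff
    (f := fun n : ℕ => (1 : ℝ) / (n : ℝ) ^ 3 * Real.sin (π * n / 2))
    (fun x hx => ?_)).mpr hL
  · have heq : ∀ k : ℕ,
        (1 : ℝ) / ((2 * k + 1 : ℕ) : ℝ) ^ 3 * Real.sin (π * ((2 * k + 1 : ℕ) : ℝ) / 2)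
          = (-1 : ℝ) ^ k / ((2 * k + 1 : ℕ) : ℝ) ^ 3 := by
      intro k
      have harg : π * ((2 * k + 1 : ℕ) : ℝ) / 2 = (k : ℝ) * π + π / 2 := by push_cast; ring
      have hcos : Real.cos ((k : ℝ) * π) = (-1 : ℝ) ^ k := by
        have := Real.cos_nat_mul_pi_sub 0 k
        simpa using this
      rw [harg, Real.sin_add_pi_div_two, hcos]
      ring
    have hfe : (fun k : ℕ =>
        (1 : ℝ) / ((2 * k + 1 : ℕ) : ℝ) ^ 3 * Real.sin (π * ((2 * k + 1 : ℕ) : ℝ) / 2))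
          = fun k : ℕ => (-1 : ℝ) ^ k / ((2 * k + 1 : ℕ) : ℝ) ^ 3 := funext heq
    rw [← hfe]
    exact hrestrict
  · obtain ⟨m, rfl⟩ : ∃ m, x = 2 * m := by
      rcases Nat.even_or_odd x with ⟨m, hm⟩ | ⟨m, hm⟩
      · exact ⟨m, by omega⟩
      · exact absurd ⟨m, by dsimp only; omega⟩ hx
    have harg : π * ((2 * m : ℕ) : ℝ) / 2 = (m : ℝ) * π := by push_cast; ring
    rw [harg, Real.sin_nat_mul_pi, mul_zero]

private lemma aux_hasSum_pB : HasSum pB (π ^ 2 / 8 - 1) := by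
  have h := aux_hasSum_pair (aux_hasSum_shift aux_hasSum_odd_sq)
  have hfe : (fun j : ℕ => 1 / ((2 * (2 * j) + 1 + 2 : ℕ) : ℝ) ^ 2
      + 1 / ((2 * (2 * j + 1) + 1 + 2 : ℕ) : ℝ) ^ 2) = pB := by
    funext j
    unfold pB
    push_cast
    norm_num
    ring_nf
  convert h using 1
  · rw [← hfe]
    funext j
    congr 2 <;> push_cast <;> ring
  · norm_num

private lemma aux_hasSum_pC : HasSum pC (1 - π ^ 3 / 32) := by
  have h := aux_hasSum_pair (aux_hasSum_shift aux_hasSum_beta_three)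
  have h' : HasSum (α := ℝ) _ _ := h.neg
  have hfe : (fun j : ℕ => -((-1 : ℝ) ^ (2 * j + 1) / ((2 * (2 * j + 1) + 1 : ℕ) : ℝ) ^ 3
      + (-1 : ℝ) ^ (2 * j + 1 + 1) / ((2 * (2 * j + 1 + 1) + 1 : ℕ) : ℝ) ^ 3)) = pC := by
    funext j
    unfold pC
    have e1 : (-1 : ℝ) ^ (2 * j + 1) = -1 := by
      rw [pow_succ, pow_mul]; norm_num
    have e2 : (-1 : ℝ) ^ (2 * j + 1 + 1) = 1 := by rw [pow_succ, e1]; norm_num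
    rw [e1, e2]
    push_cast
    ring
  rw [← hfe]
  convert h' using 1
  norm_num

/-- Sum of `(n+1)^2 r^(n+1)`. -/
private lemma aux_hasSum_sq_geometric {r : ℝ} (hr : |r| < 1) :
    HasSum (fun n : ℕ => ((n : ℝ) + 1) ^ 2 * r ^ (n + 1))
      (2 * r / (1 - r) ^ 3 - r / (1 - r) ^ 2) := by
  have hr' : ‖r‖ < 1 := by rwa [Real.norm_eq_abs]
  have h2 := hasSum_choose_mul_geometric_of_norm_lt_one (𝕜 := ℝ) 2 hr'
  have h1 := hasSum_choose_mul_geometric_of_norm_lt_one (𝕜 := ℝ) 1 hr'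
  have hcomb : HasSum (α := ℝ) _ _ := ((h2.mul_left 2).sub h1).mul_left r
  convert hcomb using 1
  · funext n
    have e2 : (((n + 2).choose 2 : ℕ) : ℝ) = ((n : ℝ) + 2) * ((n : ℝ) + 1) / 2 := by
      rw [Nat.cast_choose_two]
      push_cast
      ring
    have e1 : (((n + 1).choose 1 : ℕ) : ℝ) = (n : ℝ) + 1 := by
      rw [Nat.choose_one_right]
      push_cast
      ring
    rw [e2, e1, pow_succ]
    ring
  · have hr1 : (1 - r) ≠ 0 := (by linarith [(abs_lt.mp hr).2] : (0:ℝ) < 1 - r).ne'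
    field_simp
    ring

/-- Real Riemann zeta values via the series `∑ 1/k^m`. -/
noncomputable def zetaR (m : ℕ) : ℝ := ∑' k : ℕ, 1 / ((k : ℝ) + 1) ^ m

private noncomputable def Fnk (n k : ℕ) : ℝ :=
  ((n : ℝ) + 1) ^ 2 * ((16 * ((k : ℝ) + 1) ^ 2)⁻¹) ^ (n + 1)

private lemma aux_q_lt_one (k : ℕ) : |(16 * ((k : ℝ) + 1) ^ 2)⁻¹| < 1 := by
  have hk : (0 : ℝ) ≤ (k : ℝ) := Nat.cast_nonneg k
  have h1 : (1 : ℝ) ≤ 16 * ((k : ℝ) + 1) ^ 2 := by nlinarith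
  rw [abs_of_nonneg (by positivity)]
  rw [inv_lt_one_iff₀]
  right
  nlinarith

private lemma aux_hasSum_col (k : ℕ) :
    HasSum (fun n : ℕ => Fnk n k)
      (2 * ((16 * ((k : ℝ) + 1) ^ 2)⁻¹) / (1 - (16 * ((k : ℝ) + 1) ^ 2)⁻¹) ^ 3
        - ((16 * ((k : ℝ) + 1) ^ 2)⁻¹) / (1 - (16 * ((k : ℝ) + 1) ^ 2)⁻¹) ^ 2) :=
  aux_hasSum_sq_geometric (aux_q_lt_one k)

/-- Partial fraction decomposition of the per-`k` value. -/
private lemma aux_partial_fractions (k : ℕ) :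
    2 * ((16 * ((k : ℝ) + 1) ^ 2)⁻¹) / (1 - (16 * ((k : ℝ) + 1) ^ 2)⁻¹) ^ 3
      - ((16 * ((k : ℝ) + 1) ^ 2)⁻¹) / (1 - (16 * ((k : ℝ) + 1) ^ 2)⁻¹) ^ 2
    = (1 / 8) * pA k + (3 / 8) * pB k + (1 / 4) * pC k := by
  unfold pA pB pC
  have hk : (0 : ℝ) ≤ (k : ℝ) := Nat.cast_nonneg k
  set x : ℝ := (k : ℝ) + 1 with hx
  have hx1 : 1 ≤ x := by rw [hx]; linarith
  have hxne : x ≠ 0 := by positivity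
  have hq : (16 * x ^ 2) ≠ 0 := by positivity
  have h3 : (4 * (k : ℝ) + 3) = 4 * x - 1 := by rw [hx]; ring
  have h5 : (4 * (k : ℝ) + 5) = 4 * x + 1 := by rw [hx]; ring
  have hm : (4 * x - 1) ≠ 0 := by nlinarith
  have hp : (4 * x + 1) ≠ 0 := by nlinarith
  have e : 1 - (16 * x ^ 2)⁻¹ = ((4 * x - 1) * (4 * x + 1)) / (16 * x ^ 2) := by
    field_simp
    ring
  rw [h3, h5, e]
  have hmp : (4 * x - 1) * (4 * x + 1) ≠ 0 := mul_ne_zero hm hp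
  have hm' : x * 4 - 1 ≠ 0 := by rw [mul_comm]; exact hm
  field_simp
  ring

private lemma aux_row_eq (n : ℕ) :
    zetaR (2 * (n + 1)) * ((n : ℝ) + 1) ^ 2 / 16 ^ (n + 1) = ∑' k, Fnk n k := by
  unfold zetaR
  rw [← tsum_mul_right, ← tsum_div_const]
  congr 1
  funext k
  have hc : (0 : ℝ) < (k : ℝ) + 1 := by positivity
  have hpow : (16 * ((k : ℝ) + 1) ^ 2) ^ (n + 1)
      = 16 ^ (n + 1) * ((k : ℝ) + 1) ^ (2 * (n + 1)) := by
    rw [mul_pow, pow_mul]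
  unfold Fnk
  rw [inv_pow, hpow]
  have h16 : (0:ℝ) < (16:ℝ) ^ (n + 1) := by positivity
  have hcp : (0:ℝ) < ((k : ℝ) + 1) ^ (2 * (n + 1)) := by positivity
  field_simp

private lemma aux_Fnk_nonneg (n k : ℕ) : 0 ≤ Fnk n k := by
  unfold Fnk
  positivity

private lemma aux_row_summable (n : ℕ) : Summable (fun k => Fnk n k) := by
  apply Summable.of_nonneg_of_le (fun k => aux_Fnk_nonneg n k) (fun k => ?_)
    (aux_summable_base.mul_left (((n : ℝ) + 1) ^ 2))
  unfold Fnk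
  have hk : (0 : ℝ) ≤ (k : ℝ) := Nat.cast_nonneg k
  have hq0 : (0:ℝ) ≤ (16 * ((k : ℝ) + 1) ^ 2)⁻¹ := by positivity
  have hq1 : (16 * ((k : ℝ) + 1) ^ 2)⁻¹ ≤ 1 / ((k : ℝ) + 1) ^ 2 := by
    rw [one_div]
    apply inv_anti₀ (by positivity)
    nlinarith
  have hqle : ((16 * ((k : ℝ) + 1) ^ 2)⁻¹) ^ (n + 1) ≤ (16 * ((k : ℝ) + 1) ^ 2)⁻¹ := by
    have h1 : (16 * ((k : ℝ) + 1) ^ 2)⁻¹ ≤ 1 := by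
      rw [inv_le_one_iff₀]
      right
      nlinarith
    calc ((16 * ((k : ℝ) + 1) ^ 2)⁻¹) ^ (n + 1)
        ≤ ((16 * ((k : ℝ) + 1) ^ 2)⁻¹) ^ 1 := pow_le_pow_of_le_one hq0 h1 (by omega)
      _ = (16 * ((k : ℝ) + 1) ^ 2)⁻¹ := pow_one _
  calc ((n : ℝ) + 1) ^ 2 * ((16 * ((k : ℝ) + 1) ^ 2)⁻¹) ^ (n + 1)
      ≤ ((n : ℝ) + 1) ^ 2 * ((16 * ((k : ℝ) + 1) ^ 2)⁻¹) := by
        apply mul_le_mul_of_nonneg_left hqle (by positivity)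
    _ ≤ ((n : ℝ) + 1) ^ 2 * (1 / ((k : ℝ) + 1) ^ 2) := by
        apply mul_le_mul_of_nonneg_left hq1 (by positivity)

private lemma aux_uncurry_summable : Summable (fun p : ℕ × ℕ => Fnk p.1 p.2) := by
  rw [summable_prod_of_nonneg (fun p => aux_Fnk_nonneg p.1 p.2)]
  constructor
  · exact fun n => aux_row_summable n
  · -- bound the row sums by a geometric-type series
    have Z := ∑' k : ℕ, 1 / ((k : ℝ) + 1) ^ 2
    have hgeo : Summable (fun n : ℕ => ((n : ℝ) + 1) ^ 2 * (1 / 16 : ℝ) ^ (n + 1)) :=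
      (aux_hasSum_sq_geometric (r := 1/16) (by rw [abs_of_pos]; norm_num; norm_num)).summable
    apply Summable.of_nonneg_of_le (fun n => tsum_nonneg (fun k => aux_Fnk_nonneg n k))
      (fun n => ?_) (hgeo.mul_right (∑' k : ℕ, 1 / ((k : ℝ) + 1) ^ 2))
    have hle : ∀ k : ℕ, Fnk n k
        ≤ ((n : ℝ) + 1) ^ 2 * (1 / 16 : ℝ) ^ (n + 1) * (1 / ((k : ℝ) + 1) ^ 2) := by
      intro k
      unfold Fnk
      have hk : (0 : ℝ) ≤ (k : ℝ) := Nat.cast_nonneg k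
      have hsplit : ((16 * ((k : ℝ) + 1) ^ 2)⁻¹) ^ (n + 1)
          = (1 / 16 : ℝ) ^ (n + 1) * ((((k : ℝ) + 1) ^ 2)⁻¹) ^ (n + 1) := by
        rw [← mul_pow]
        congr 1
        rw [mul_inv]
        norm_num
      rw [hsplit, ← mul_assoc]
      apply mul_le_mul_of_nonneg_left _ (by positivity)
      have h1 : (((k : ℝ) + 1) ^ 2)⁻¹ ≤ 1 := by
        rw [inv_le_one_iff₀]; right; nlinarith
      have h0 : (0:ℝ) ≤ (((k : ℝ) + 1) ^ 2)⁻¹ := by positivity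
      calc ((((k : ℝ) + 1) ^ 2)⁻¹) ^ (n + 1)
          ≤ ((((k : ℝ) + 1) ^ 2)⁻¹) ^ 1 := pow_le_pow_of_le_one h0 h1 (by omega)
        _ = (((k : ℝ) + 1) ^ 2)⁻¹ := pow_one _
        _ = 1 / ((k : ℝ) + 1) ^ 2 := by rw [one_div]
    calc ∑' k, Fnk n k
        ≤ ∑' k : ℕ, ((n : ℝ) + 1) ^ 2 * (1 / 16 : ℝ) ^ (n + 1) * (1 / ((k : ℝ) + 1) ^ 2) :=
          Summable.tsum_le_tsum hle (aux_row_summable n)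
            (aux_summable_base.mul_left _)
      _ = ((n : ℝ) + 1) ^ 2 * (1 / 16 : ℝ) ^ (n + 1) * ∑' k : ℕ, 1 / ((k : ℝ) + 1) ^ 2 := by
          rw [tsum_mul_left]

theorem zeta_series_sixteen_n_sq :
    ∑' n : ℕ, zetaR (2 * (n + 1)) * ((n : ℝ) + 1) ^ 2 / 16 ^ (n + 1) =
      (π / 32) * (3 * π / 2 - π ^ 2 / 4 - 1) := by
  have step1 : ∑' n : ℕ, zetaR (2 * (n + 1)) * ((n : ℝ) + 1) ^ 2 / 16 ^ (n + 1)
      = ∑' n : ℕ, ∑' k : ℕ, Fnk n k := by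
    congr 1
    funext n
    exact aux_row_eq n
  have hU := aux_uncurry_summable
  have hU' : Summable (fun p : ℕ × ℕ => Fnk p.2 p.1) := by
    have := (Equiv.prodComm ℕ ℕ).summable_iff.mpr hU
    simpa [Function.comp_def] using this
  have step2 : ∑' n : ℕ, ∑' k : ℕ, Fnk n k = ∑' k : ℕ, ∑' n : ℕ, Fnk n k := by
    rw [← Summable.tsum_prod' hU (fun n => aux_row_summable n),
      ← Summable.tsum_prod' hU' (fun k => (aux_hasSum_col k).summable)]
    exact ((Equiv.prodComm ℕ ℕ).tsum_eq _).symm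
  have step3 : ∑' k : ℕ, ∑' n : ℕ, Fnk n k
      = ∑' k : ℕ, ((1 / 8) * pA k + (3 / 8) * pB k + (1 / 4) * pC k) := by
    congr 1
    funext k
    rw [(aux_hasSum_col k).tsum_eq]
    exact aux_partial_fractions k
  have step4 : HasSum (fun k : ℕ => (1 / 8) * pA k + (3 / 8) * pB k + (1 / 4) * pC k)
      ((1 / 8) * (1 - π / 4) + (3 / 8) * (π ^ 2 / 8 - 1) + (1 / 4) * (1 - π ^ 3 / 32)) :=
    ((aux_hasSum_pA.mul_left (1 / 8)).add (aux_hasSum_pB.mul_left (3 / 8))).add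
      (aux_hasSum_pC.mul_left (1 / 4))
  rw [step1, step2, step3, step4.tsum_eq]
  ring
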